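/- Let A be a symmetric p×p real matrix and ρ > 0. Then there exists a unique symmetric positive definite p×p matrix Θ satisfying ρΘ − Θ⁻¹ = ρA. Moreover, if A = Q H Qᵀ with Q orthogonal and H = diag(h_1,…,h_p), then Θ = Q D Qᵀ with D = diag(d_1,…,d_p) and d_i = (h_i + √(h_i² + 4/ρ))/2. -/

import Mathlib

open Matrix

section Aux

variable {n : Type*} [Fintype n] [DecidableEq n]

private lemma trace_nonneg_of_posSemidef' {M : Matrix n n ℝ} (hM : M.PosSemidef) :
    0 ≤ M.trace := by
  rw [Matrix.trace]
  refine Finset.sum_nonneg fun i _ => ?_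
  have := hM.dotProduct_mulVec_nonneg (Pi.single i 1)
  simpa [dotProduct, Matrix.mulVec, Pi.single_apply] using this

private lemma trace_mul_nonneg' {S P : Matrix n n ℝ} (hS : S.PosSemidef) (hP : P.PosSemidef) :
    0 ≤ (S * P).trace := by
  open scoped MatrixOrder in
  obtain ⟨B, rfl⟩ := CStarAlgebra.nonneg_iff_eq_star_mul_self.mp hS.nonneg
  rw [Matrix.mul_assoc, Matrix.trace_mul_comm]
  exact trace_nonneg_of_posSemidef' (hP.mul_mul_conjTranspose_same B)

omit [DecidableEq n] in
private lemma eq_zero_of_trace_le' {D : Matrix n n ℝ} (h : (Dᵀ * D).trace ≤ 0) : D = 0 := by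
  have htr : (Dᵀ * D).trace = ∑ j, ∑ i, D i j ^ 2 := by
    simp [Matrix.trace, Matrix.mul_apply, Matrix.diag, sq]
  rw [htr] at h
  have hnn : ∀ j ∈ Finset.univ, (0:ℝ) ≤ ∑ i, D i j ^ 2 := fun j _ =>
    Finset.sum_nonneg fun i _ => sq_nonneg _
  have h0 : ∑ j, ∑ i, D i j ^ 2 = 0 := le_antisymm h (Finset.sum_nonneg hnn)
  ext i j
  have h1 := (Finset.sum_eq_zero_iff_of_nonneg hnn).mp h0 j (Finset.mem_univ j)
  have h2 := (Finset.sum_eq_zero_iff_of_nonneg (fun i _ => sq_nonneg (D i j))).mp h1 i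
    (Finset.mem_univ i)
  simpa using pow_eq_zero_iff (n := 2) (by norm_num) |>.mp h2

private lemma uniq' {ρ : ℝ} (hρ : 0 < ρ) {A Θ₁ Θ₂ : Matrix n n ℝ}
    (h₁ : Θ₁.PosDef) (h₂ : Θ₂.PosDef)
    (e₁ : ρ • Θ₁ - Θ₁⁻¹ = ρ • A) (e₂ : ρ • Θ₂ - Θ₂⁻¹ = ρ • A) : Θ₁ = Θ₂ := by
  have d₁ : IsUnit Θ₁.det := h₁.det_pos.ne'.isUnit
  have d₂ : IsUnit Θ₂.det := h₂.det_pos.ne'.isUnit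
  set D := Θ₁ - Θ₂ with hD
  have hdiff : ρ • Θ₁ - Θ₁⁻¹ = ρ • Θ₂ - Θ₂⁻¹ := by rw [e₁, e₂]
  have hinv : Θ₁⁻¹ - Θ₂⁻¹ = ρ • D := by
    have : Θ₁⁻¹ - Θ₂⁻¹ =
        (ρ • Θ₂ - Θ₂⁻¹) - (ρ • Θ₁ - Θ₁⁻¹) + (ρ • Θ₁ - ρ • Θ₂) := by abel
    rw [this, ← hdiff, hD, smul_sub]
    abel
  have key : ρ • (Θ₁ * D * Θ₂) = -D := by
    have h3 : Θ₁ * (Θ₁⁻¹ - Θ₂⁻¹) * Θ₂ = Θ₂ - Θ₁ := by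
      rw [Matrix.mul_sub, Matrix.mul_nonsing_inv _ d₁, Matrix.sub_mul, one_mul,
        Matrix.mul_assoc, Matrix.nonsing_inv_mul _ d₂, Matrix.mul_one]
    rw [hinv] at h3
    have h4 : ρ • (Θ₁ * D * Θ₂) = Θ₂ - Θ₁ := by
      rw [← h3]; simp [Matrix.mul_smul, Matrix.smul_mul]
    rw [h4, hD, neg_sub]
  have tr1 : ρ * (Dᵀ * (Θ₁ * D * Θ₂)).trace = -(Dᵀ * D).trace := by
    have := congrArg (fun M => (Dᵀ * M).trace) key
    simpa [Matrix.mul_smul, Matrix.trace_smul, Matrix.mul_neg, Matrix.trace_neg,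
      smul_eq_mul] using this
  have hpsd : (Dᵀ * Θ₁ * D).PosSemidef := by
    have := h₁.posSemidef.conjTranspose_mul_mul_same D
    rwa [Matrix.conjTranspose_eq_transpose_of_trivial] at this
  have tr2 : 0 ≤ (Dᵀ * (Θ₁ * D * Θ₂)).trace := by
    have : Dᵀ * (Θ₁ * D * Θ₂) = (Dᵀ * Θ₁ * D) * Θ₂ := by
      simp only [Matrix.mul_assoc]
    rw [this]
    exact trace_mul_nonneg' hpsd h₂.posSemidef
  have hle : (Dᵀ * D).trace ≤ 0 := by nlinarith
  have : D = 0 := eq_zero_of_trace_le' hle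
  rw [hD] at this
  exact sub_eq_zero.mp this

private lemma scal' {ρ : ℝ} (hρ : 0 < ρ) (h : ℝ) :
    0 < (h + Real.sqrt (h ^ 2 + 4 / ρ)) / 2 ∧
    ρ * ((h + Real.sqrt (h ^ 2 + 4 / ρ)) / 2) - ((h + Real.sqrt (h ^ 2 + 4 / ρ)) / 2)⁻¹
      = ρ * h := by
  set s := Real.sqrt (h ^ 2 + 4 / ρ) with hs
  have h4 : 0 < 4 / ρ := by positivity
  have hs2 : s ^ 2 = h ^ 2 + 4 / ρ := Real.sq_sqrt (by positivity)
  have habs : |h| < s := by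
    rw [← Real.sqrt_sq_eq_abs, hs]
    exact Real.sqrt_lt_sqrt (sq_nonneg h) (by linarith)
  have hpos : 0 < (h + s) / 2 := by
    have := neg_abs_le h
    linarith
  refine ⟨hpos, ?_⟩
  have hsum : 0 < h + s := by linarith [neg_abs_le h]
  have hs2' : ρ * s ^ 2 = ρ * h ^ 2 + 4 := by
    rw [hs2]; field_simp
  field_simp
  ring_nf
  linear_combination hs2'

private lemma sol' {ρ : ℝ} (hρ : 0 < ρ) (Q : Matrix n n ℝ) (h : n → ℝ) (hQ : Qᵀ * Q = 1) :
    (Q * Matrix.diagonal (fun i => (h i + Real.sqrt ((h i) ^ 2 + 4 / ρ)) / 2) * Qᵀ).IsSymm ∧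
    (Q * Matrix.diagonal (fun i => (h i + Real.sqrt ((h i) ^ 2 + 4 / ρ)) / 2) * Qᵀ).PosDef ∧
    ρ • (Q * Matrix.diagonal (fun i => (h i + Real.sqrt ((h i) ^ 2 + 4 / ρ)) / 2) * Qᵀ)
      - (Q * Matrix.diagonal (fun i => (h i + Real.sqrt ((h i) ^ 2 + 4 / ρ)) / 2) * Qᵀ)⁻¹
      = ρ • (Q * Matrix.diagonal h * Qᵀ) := by
  set d : n → ℝ := fun i => (h i + Real.sqrt ((h i) ^ 2 + 4 / ρ)) / 2 with hd
  have hdpos : ∀ i, 0 < d i := fun i => (scal' hρ (h i)).1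
  have hdid : ∀ i, ρ * d i - (d i)⁻¹ = ρ * h i := fun i => (scal' hρ (h i)).2
  have hQ2 : Q * Qᵀ = 1 := mul_eq_one_comm.mp hQ
  have hsymm : (Q * Matrix.diagonal d * Qᵀ).IsSymm := by
    unfold Matrix.IsSymm
    simp [Matrix.transpose_mul, Matrix.diagonal_transpose, Matrix.mul_assoc]
  have hpd : (Q * Matrix.diagonal d * Qᵀ).PosDef := by
    refine Matrix.PosDef.of_dotProduct_mulVec_pos ?_ ?_
    · rwa [Matrix.IsHermitian, Matrix.conjTranspose_eq_transpose_of_trivial]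
    · intro x hx
      have hy : Qᵀ *ᵥ x ≠ 0 := by
        intro h0
        apply hx
        have : Q *ᵥ (Qᵀ *ᵥ x) = x := by
          rw [Matrix.mulVec_mulVec, hQ2, Matrix.one_mulVec]
        rw [h0, Matrix.mulVec_zero] at this
        exact this.symm
      have hdg : (Matrix.diagonal d).PosDef := Matrix.PosDef.diagonal hdpos
      have := hdg.dotProduct_mulVec_pos hy
      simpa [star_trivial, ← Matrix.mulVec_mulVec, Matrix.dotProduct_mulVec,
        Matrix.vecMul_transpose, Matrix.mulVec_transpose] using this
  refine ⟨hsymm, hpd, ?_⟩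
  have hinv : (Q * Matrix.diagonal d * Qᵀ)⁻¹ = Q * Matrix.diagonal (fun i => (d i)⁻¹) * Qᵀ := by
    apply Matrix.inv_eq_right_inv
    calc Q * Matrix.diagonal d * Qᵀ * (Q * Matrix.diagonal (fun i => (d i)⁻¹) * Qᵀ)
        = Q * Matrix.diagonal d * (Qᵀ * Q) * Matrix.diagonal (fun i => (d i)⁻¹) * Qᵀ := by
          simp only [Matrix.mul_assoc]
      _ = Q * (Matrix.diagonal d * Matrix.diagonal (fun i => (d i)⁻¹)) * Qᵀ := by
          rw [hQ]; simp only [Matrix.mul_one, Matrix.mul_assoc]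
      _ = 1 := by
          rw [Matrix.diagonal_mul_diagonal]
          have : (fun i => d i * (d i)⁻¹) = fun _ => (1:ℝ) := by
            funext i; exact mul_inv_cancel₀ (hdpos i).ne'
          rw [this, Matrix.diagonal_one, Matrix.mul_one, hQ2]
  have key : ρ • Matrix.diagonal d - Matrix.diagonal (fun i => (d i)⁻¹)
      = ρ • Matrix.diagonal h := by
    ext i j
    rcases eq_or_ne i j with rfl | hij
    · simpa [Matrix.diagonal_apply_eq] using hdid i
    · simp [Matrix.diagonal_apply_ne _ hij]
  rw [hinv]
  calc ρ • (Q * Matrix.diagonal d * Qᵀ) - Q * Matrix.diagonal (fun i => (d i)⁻¹) * Qᵀ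
      = Q * (ρ • Matrix.diagonal d - Matrix.diagonal fun i => (d i)⁻¹) * Qᵀ := by
        simp only [Matrix.mul_sub, Matrix.sub_mul, Matrix.mul_smul, Matrix.smul_mul]
    _ = Q * (ρ • Matrix.diagonal h) * Qᵀ := by rw [key]
    _ = ρ • (Q * Matrix.diagonal h * Qᵀ) := by
        simp only [Matrix.mul_smul, Matrix.smul_mul]

end Aux

/-- for symmetric `A` and `ρ > 0` there is a unique symmetric positive
definite `Θ` with `ρΘ − Θ⁻¹ = ρA`; moreover if `A = Q H Qᵀ` with `Q` orthogonal and
`H = diag(h)`, then `Θ = Q D Qᵀ` with `D = diag(d)`, `d_i = (h_i + √(h_i² + 4/ρ))/2`. -/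
theorem admm_theta_update_exists_unique {p : ℕ}
    (A : Matrix (Fin p) (Fin p) ℝ) (hA : A.IsSymm) (ρ : ℝ) (hρ : 0 < ρ) :
    (∃! Θ : Matrix (Fin p) (Fin p) ℝ,
        Θ.IsSymm ∧ Θ.PosDef ∧ ρ • Θ - Θ⁻¹ = ρ • A) ∧
    ∀ (Q : Matrix (Fin p) (Fin p) ℝ) (h : Fin p → ℝ),
      Qᵀ * Q = 1 → A = Q * Matrix.diagonal h * Qᵀ →
      ∀ Θ : Matrix (Fin p) (Fin p) ℝ,
        Θ.IsSymm → Θ.PosDef → ρ • Θ - Θ⁻¹ = ρ • A →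
        Θ = Q * Matrix.diagonal
              (fun i => (h i + Real.sqrt ((h i) ^ 2 + 4 / ρ)) / 2) * Qᵀ := by
  have hherm : A.IsHermitian := by
    rwa [Matrix.IsHermitian, Matrix.conjTranspose_eq_transpose_of_trivial]
  set Q₀ : Matrix (Fin p) (Fin p) ℝ := (hherm.eigenvectorUnitary : Matrix (Fin p) (Fin p) ℝ)
  have hQ₀ : Q₀ᵀ * Q₀ = 1 := by
    have := Unitary.coe_star_mul_self hherm.eigenvectorUnitary
    simpa [Matrix.star_eq_conjTranspose, Matrix.conjTranspose_eq_transpose_of_trivial] using this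
  have hAeq₀ : A = Q₀ * Matrix.diagonal hherm.eigenvalues * Q₀ᵀ := by
    have := hherm.spectral_theorem
    simpa [Matrix.star_eq_conjTranspose, Matrix.conjTranspose_eq_transpose_of_trivial,
      Function.comp] using this
  obtain ⟨hs₀, hpd₀, heq₀⟩ := sol' hρ Q₀ hherm.eigenvalues hQ₀
  rw [← hAeq₀] at heq₀
  refine ⟨⟨_, ⟨hs₀, hpd₀, heq₀⟩, fun Θ' ⟨_, hpd', heq'⟩ => uniq' hρ hpd' hpd₀ heq' heq₀⟩, ?_⟩
  intro Q h hQ hAeq Θ hΘs hΘpd hΘeq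
  obtain ⟨hs₁, hpd₁, heq₁⟩ := sol' hρ Q h hQ
  rw [← hAeq] at heq₁
  exact uniq' hρ hΘpd hpd₁ hΘeq heq₁
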